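/- Let 0 < p, q < 1 with q + 2p < 1, and suppose a_{m,t} ≤ 1 − m^{-q} for all m and all 1 ≤ t ≤ m. Then the null and alternative hypotheses separate asymptotically: TV(P0_m, P1_m) → 1 as m → ∞. (Theorem 3.2, part 1: asymptotic separation.) -/

import Mathlib

open MeasureTheory Filter

/-- The uniform distribution on `[0, a]` (for `a > 0`). -/
noncomputable def unif (a : ℝ) : Measure ℝ :=
  (ENNReal.ofReal a)⁻¹ • volume.restrict (Set.Icc 0 a)

/-- The mixture `(1 - ε)·U[0,1] + ε·U[0,a]`. -/
noncomputable def mix (ε a : ℝ) : Measure ℝ :=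
  ENNReal.ofReal (1 - ε) • unif 1 + ENNReal.ofReal ε • unif a

/-- The null law `P0_m`: `m` i.i.d. uniform-`[0,1]` coordinates. -/
noncomputable def nullLaw (m : ℕ) : Measure (Fin m → ℝ) :=
  Measure.pi fun _ => unif 1

/-- The alternative law `P1_m`: independent coordinates, the `t`-th distributed as
`(1 - ε)·U[0,1] + ε·U[0, a t]`. -/
noncomputable def altLaw (m : ℕ) (ε : ℝ) (a : Fin m → ℝ) : Measure (Fin m → ℝ) :=
  Measure.pi fun t => mix ε (a t)

/-- Total variation distance `sup_A |μ(A) - ν(A)|` over measurable sets. -/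
noncomputable def TV {α : Type*} [MeasurableSpace α] (μ ν : Measure α) : ℝ :=
  ⨆ A : {s : Set α // MeasurableSet s}, |(μ A).toReal - (ν A).toReal|

open ProbabilityTheory Set Function

section Helpers

lemma pi_preimage_eval {m : ℕ} (μ : Fin m → Measure ℝ) [∀ i, IsProbabilityMeasure (μ i)]
    (i : Fin m) (E : Set ℝ) :
    Measure.pi μ (Function.eval i ⁻¹' E) = μ i E := by
  rw [Set.eval_preimage, Measure.pi_pi]
  rw [Finset.prod_eq_single i]
  · simp
  · intro j _ hj
    simp [Function.update_apply, hj]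
  · simp

lemma indep_eval {m : ℕ} (μ : Fin m → Measure ℝ) [∀ i, IsProbabilityMeasure (μ i)]
    {i j : Fin m} (hij : i ≠ j) :
    IndepFun (Function.eval i) (Function.eval j) (Measure.pi μ) := by
  rw [indepFun_iff_measure_inter_preimage_eq_mul]
  intro s t hs ht
  have : Function.eval i ⁻¹' s ∩ Function.eval j ⁻¹' t =
      Set.pi Set.univ (Function.update (Function.update (fun _ : Fin m => (Set.univ : Set ℝ)) i s) j t) := by
    ext x
    simp only [Set.mem_inter_iff, Set.mem_preimage, Set.mem_pi, Set.mem_univ, forall_true_left]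
    constructor
    · rintro ⟨h1, h2⟩ k
      simp only [Function.update_apply]
      split_ifs with hkj hki
      · subst hkj; exact h2
      · subst hki; exact h1
      · trivial
    · intro h
      constructor
      · have := h i
        simpa [Function.update_apply, hij] using this
      · have := h j
        simpa using this
  rw [this, Measure.pi_pi, pi_preimage_eval μ i s, pi_preimage_eval μ j t]
  rw [← Finset.prod_subset (Finset.subset_univ {i, j})]
  · rw [Finset.prod_pair hij]
    simp [Function.update_apply, hij]
  · intro k _ hk
    simp only [Finset.mem_insert, Finset.mem_singleton, not_or] at hk
    simp [Function.update_apply, hk.1, hk.2]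

lemma cheb {m : ℕ} (μ : Fin m → Measure ℝ) [∀ i, IsProbabilityMeasure (μ i)]
    {E : Set ℝ} (hE : MeasurableSet E) {g : ℝ} (hg : 0 < g) :
    Measure.pi μ {x | g ≤ |(∑ i, E.indicator (fun _ => (1:ℝ)) (x i)) - ∑ i, (μ i E).toReal|}
      ≤ ENNReal.ofReal ((∑ i, (μ i E).toReal) / g ^ 2) := by
  set π := Measure.pi μ with hπ
  haveI : IsProbabilityMeasure π := by rw [hπ]; infer_instance
  set X : Fin m → (Fin m → ℝ) → ℝ := fun i x => E.indicator (fun _ => (1:ℝ)) (x i) with hX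
  have hXeq : ∀ i, X i = (Function.eval i ⁻¹' E).indicator (fun _ => (1:ℝ)) := by
    intro i; funext x
    by_cases h : x i ∈ E <;> simp [hX, Set.indicator, h]
  have hmsets : ∀ i : Fin m, MeasurableSet ((Function.eval i : (Fin m → ℝ) → ℝ) ⁻¹' E) := by
    intro i
    exact (measurable_pi_apply i) hE
  have hmem : ∀ i, MemLp (X i) 2 π := by
    intro i; rw [hXeq i]
    exact memLp_indicator_const 2 (hmsets i) 1 (Or.inr (measure_ne_top _ _))
  have hint : ∀ i, ∫ x, X i x ∂π = (μ i E).toReal := by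
    intro i
    rw [hXeq i, integral_indicator_const (1:ℝ) (hmsets i), smul_eq_mul, mul_one,
      measureReal_def, pi_preimage_eval]
  have hmemS : MemLp (∑ i, X i) 2 π := memLp_finset_sum' _ (fun i _ => hmem i)
  have hES : π[∑ i, X i] = ∑ i, (μ i E).toReal := by
    simp only [Finset.sum_apply]
    rw [integral_finset_sum _ (fun i _ => (hmem i).integrable one_le_two)]
    exact Finset.sum_congr rfl fun i _ => hint i
  have hvarX : ∀ i, variance (X i) π ≤ (μ i E).toReal := by
    intro i
    rw [variance_eq_sub (hmem i)]
    have hsq : X i ^ 2 = X i := by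
      funext x
      by_cases h : x i ∈ E <;> simp [hX, Set.indicator, h]
    rw [hsq, hint i]
    nlinarith [sq_nonneg ((μ i E).toReal)]
  have hvarS : variance (∑ i, X i) π ≤ ∑ i, (μ i E).toReal := by
    rw [IndepFun.variance_sum (fun i _ => hmem i)]
    · exact Finset.sum_le_sum fun i _ => hvarX i
    · intro i _ j _ hij
      have hind : Measurable (E.indicator (fun _ => (1:ℝ))) := measurable_const.indicator hE
      exact (indep_eval μ hij).comp hind hind
  have hcheb := meas_ge_le_variance_div_sq (μ := π) hmemS hg
  rw [hES] at hcheb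
  refine le_trans ?_ (le_trans hcheb ?_)
  · apply le_of_eq
    congr 1
    ext x
    simp [Finset.sum_apply, hX]
  · apply ENNReal.ofReal_le_ofReal
    exact div_le_div_of_nonneg_right hvarS (by positivity) |>.trans_eq rfl

lemma unif_apply (a : ℝ) {s : Set ℝ} (hs : MeasurableSet s) :
    unif a s = (ENNReal.ofReal a)⁻¹ * volume (s ∩ Set.Icc 0 a) := by
  simp [unif, Measure.smul_apply, Measure.restrict_apply hs, smul_eq_mul]

lemma unif_prob {a : ℝ} (ha : 0 < a) : IsProbabilityMeasure (unif a) := by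
  constructor
  rw [unif_apply a MeasurableSet.univ, Set.univ_inter, Real.volume_Icc, sub_zero,
    ENNReal.inv_mul_cancel (ENNReal.ofReal_pos.mpr ha).ne' ENNReal.ofReal_ne_top]

lemma mix_prob {ε a : ℝ} (hε0 : 0 ≤ ε) (hε1 : ε ≤ 1) (ha : 0 < a) :
    IsProbabilityMeasure (mix ε a) := by
  constructor
  have h1 := (unif_prob one_pos).measure_univ
  have h2 := (unif_prob ha).measure_univ
  simp only [mix, Measure.add_apply, Measure.smul_apply, smul_eq_mul, h1, h2, mul_one]
  rw [← ENNReal.ofReal_add (by linarith) hε0]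
  norm_num

lemma unif_one_Ioi {c : ℝ} (hc0 : 0 ≤ c) : unif 1 (Set.Ioi c) = ENNReal.ofReal (1 - c) := by
  rw [unif_apply _ measurableSet_Ioi]
  have h : Set.Ioi c ∩ Set.Icc 0 1 = Set.Ioc c 1 := by
    ext x
    simp only [Set.mem_inter_iff, Set.mem_Ioi, Set.mem_Icc, Set.mem_Ioc]
    constructor
    · rintro ⟨h1, _, h3⟩; exact ⟨h1, h3⟩
    · rintro ⟨h1, h2⟩; exact ⟨h1, by linarith, h2⟩
  rw [h, Real.volume_Ioc]
  simp

lemma unif_Ioi_zero {a c : ℝ} (hac : a ≤ c) : unif a (Set.Ioi c) = 0 := by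
  rw [unif_apply _ measurableSet_Ioi]
  have h : Set.Ioi c ∩ Set.Icc 0 a = ∅ := by
    ext x
    simp only [Set.mem_inter_iff, Set.mem_Ioi, Set.mem_Icc, Set.mem_empty_iff_false, iff_false,
      not_and]
    intro h1 h2
    intro h3
    linarith
  rw [h]
  simp

lemma mix_Ioi {ε a c : ℝ} (hε1 : ε ≤ 1) (hc0 : 0 ≤ c) (hac : a ≤ c) :
    mix ε a (Set.Ioi c) = ENNReal.ofReal ((1 - ε) * (1 - c)) := by
  simp only [mix, Measure.add_apply, Measure.smul_apply, smul_eq_mul,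
    unif_one_Ioi hc0, unif_Ioi_zero hac, mul_zero, add_zero]
  rw [← ENNReal.ofReal_mul (by linarith : (0:ℝ) ≤ 1 - ε)]

end Helpers

section MainBound

lemma main_bound (p q : ℝ) (hp0 : 0 < p) (hq0 : 0 < q) (m : ℕ) (hm : 2 ≤ m)
    (a : Fin m → ℝ) (ha0 : ∀ t, 0 < a t) (ha1 : ∀ t, a t ≤ 1 - (m : ℝ) ^ (-q)) :
    1 - 8 * (m : ℝ) ^ (q + 2 * p - 1) ≤ TV (nullLaw m) (altLaw m ((m : ℝ) ^ (-p)) a) := by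
  have hm1 : (1:ℝ) < m := by exact_mod_cast Nat.lt_of_lt_of_le one_lt_two hm
  have hmpos : (0:ℝ) < m := by linarith
  set ε := (m:ℝ) ^ (-p) with hεdef
  set δ := (m:ℝ) ^ (-q) with hδdef
  have hε0 : 0 < ε := Real.rpow_pos_of_pos hmpos _
  have hε1 : ε < 1 := Real.rpow_lt_one_of_one_lt_of_neg hm1 (by linarith)
  have hδ0 : 0 < δ := Real.rpow_pos_of_pos hmpos _
  have hδ1 : δ < 1 := Real.rpow_lt_one_of_one_lt_of_neg hm1 (by linarith)
  have hc0 : (0:ℝ) ≤ 1 - δ := by linarith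
  set g := (m:ℝ) * ε * δ / 2 with hgdef
  have hgpos : 0 < g := by
    apply div_pos _ two_pos
    exact mul_pos (mul_pos hmpos hε0) hδ0
  haveI I0 : IsProbabilityMeasure (unif 1) := unif_prob one_pos
  haveI I1 : ∀ t : Fin m, IsProbabilityMeasure ((fun t : Fin m => mix ε (a t)) t) :=
    fun t => mix_prob hε0.le hε1.le (ha0 t)
  set S : (Fin m → ℝ) → ℝ := fun x => ∑ t, (Set.Ioi (1 - δ)).indicator (fun _ => (1:ℝ)) (x t)
    with hSdef
  have hSmeas : Measurable S := by
    apply Finset.measurable_sum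
    intro t _
    exact (measurable_const.indicator measurableSet_Ioi).comp (measurable_pi_apply t)
  set A : Set (Fin m → ℝ) := {x | (m:ℝ) * δ - g ≤ S x} with hAdef
  have hA : MeasurableSet A := measurableSet_le measurable_const hSmeas
  -- per-coordinate means
  have hr0 : ((unif 1) (Set.Ioi (1 - δ))).toReal = δ := by
    rw [unif_one_Ioi hc0]
    rw [show (1:ℝ) - (1 - δ) = δ by ring, ENNReal.toReal_ofReal hδ0.le]
  have hr1 : ∀ t, ((mix ε (a t)) (Set.Ioi (1 - δ))).toReal = (1 - ε) * δ := by
    intro t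
    rw [mix_Ioi hε1.le hc0 (ha1 t)]
    rw [show (1 - ε) * (1 - (1 - δ)) = (1 - ε) * δ by ring,
      ENNReal.toReal_ofReal (by nlinarith)]
  have hsum0 : ∑ t : Fin m, ((unif 1) (Set.Ioi (1 - δ))).toReal = (m:ℝ) * δ := by
    rw [Finset.sum_const, Finset.card_univ, Fintype.card_fin, nsmul_eq_mul, hr0]
  have hsum1 : ∑ t : Fin m, ((mix ε (a t)) (Set.Ioi (1 - δ))).toReal = (m:ℝ) * ((1 - ε) * δ) := by
    rw [Finset.sum_congr rfl fun t _ => hr1 t, Finset.sum_const, Finset.card_univ,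
      Fintype.card_fin, nsmul_eq_mul]
  -- Chebyshev bounds
  have h0 := cheb (fun _ : Fin m => unif 1) (measurableSet_Ioi (a := 1 - δ)) hgpos
  have h1 := cheb (fun t : Fin m => mix ε (a t)) (measurableSet_Ioi (a := 1 - δ)) hgpos
  simp only [hsum0] at h0
  simp only [hsum1] at h1
  -- inclusion arguments
  have hcompl : Aᶜ ⊆ {x | g ≤ |S x - (m:ℝ) * δ|} := by
    intro x hx
    simp only [hAdef, Set.mem_compl_iff, Set.mem_setOf_eq, not_le] at hx
    simp only [Set.mem_setOf_eq]
    calc g ≤ (m:ℝ) * δ - S x := by linarith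
    _ ≤ |S x - (m:ℝ) * δ| := by rw [abs_sub_comm]; exact le_abs_self _
  have hsub1 : A ⊆ {x | g ≤ |S x - (m:ℝ) * ((1 - ε) * δ)|} := by
    intro x hx
    simp only [hAdef, Set.mem_setOf_eq] at hx
    simp only [Set.mem_setOf_eq]
    have h2g : (m:ℝ) * δ - (m:ℝ) * ((1 - ε) * δ) = 2 * g := by rw [hgdef]; ring
    calc g ≤ S x - (m:ℝ) * ((1 - ε) * δ) := by linarith
    _ ≤ |S x - (m:ℝ) * ((1 - ε) * δ)| := le_abs_self _
  set B : ℝ := (m:ℝ) * δ / g ^ 2 with hBdef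
  have hB0 : 0 ≤ B := by positivity
  have hnull0 : (nullLaw m) Aᶜ ≤ ENNReal.ofReal B := by
    refine le_trans (measure_mono hcompl) ?_
    exact h0
  have halt1 : (altLaw m ε a) A ≤ ENNReal.ofReal B := by
    refine le_trans (measure_mono hsub1) ?_
    refine le_trans h1 (ENNReal.ofReal_le_ofReal ?_)
    apply div_le_div_of_nonneg_right _ (by positivity)
    nlinarith
  haveI : IsProbabilityMeasure (nullLaw m) := by unfold nullLaw; infer_instance
  haveI : IsProbabilityMeasure (altLaw m ε a) := by unfold altLaw; infer_instance
  have hnullA : 1 - B ≤ ((nullLaw m) A).toReal := by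
    have h2 : ((nullLaw m) Aᶜ).toReal ≤ B := ENNReal.toReal_le_of_le_ofReal hB0 hnull0
    have hadd := congrArg ENNReal.toReal (measure_add_measure_compl (μ := nullLaw m) hA)
    rw [ENNReal.toReal_add (measure_ne_top _ _) (measure_ne_top _ _), measure_univ,
      ENNReal.toReal_one] at hadd
    linarith
  have haltA : ((altLaw m ε a) A).toReal ≤ B := ENNReal.toReal_le_of_le_ofReal hB0 halt1
  -- TV lower bound
  have hbdd : BddAbove (Set.range fun A' : {s : Set (Fin m → ℝ) // MeasurableSet s} =>
      |((nullLaw m) A').toReal - ((altLaw m ε a) A').toReal|) := by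
    refine ⟨1, ?_⟩
    rintro _ ⟨A', rfl⟩
    have h1' : ((nullLaw m) A').toReal ≤ 1 := by
      apply ENNReal.toReal_le_of_le_ofReal zero_le_one
      simpa using prob_le_one
    have h2' : ((altLaw m ε a) A').toReal ≤ 1 := by
      apply ENNReal.toReal_le_of_le_ofReal zero_le_one
      simpa using prob_le_one
    have h3' : 0 ≤ ((nullLaw m) A').toReal := ENNReal.toReal_nonneg
    have h4' : 0 ≤ ((altLaw m ε a) A').toReal := ENNReal.toReal_nonneg
    rw [abs_le]
    constructor <;> linarith
  have hTV : |((nullLaw m) A).toReal - ((altLaw m ε a) A).toReal|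
      ≤ TV (nullLaw m) (altLaw m ε a) := by
    unfold TV
    exact le_ciSup hbdd ⟨A, hA⟩
  have hlow : 1 - 2 * B ≤ TV (nullLaw m) (altLaw m ε a) := by
    refine le_trans ?_ hTV
    calc 1 - 2 * B ≤ ((nullLaw m) A).toReal - ((altLaw m ε a) A).toReal := by linarith
    _ ≤ |((nullLaw m) A).toReal - ((altLaw m ε a) A).toReal| := le_abs_self _
  -- identify B
  have hprod : (m:ℝ) * ε ^ 2 * δ = (m:ℝ) ^ (1 - 2 * p - q) := by
    have hsplit : (m:ℝ) * ε ^ 2 * δ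
        = (m:ℝ) ^ (1:ℝ) * ((m:ℝ) ^ (-p) * (m:ℝ) ^ (-p)) * (m:ℝ) ^ (-q) := by
      rw [Real.rpow_one, hεdef, hδdef]; ring
    rw [hsplit, ← Real.rpow_add hmpos, ← Real.rpow_add hmpos, ← Real.rpow_add hmpos]
    congr 1
    ring
  have hBeq : B = 4 * (m:ℝ) ^ (q + 2 * p - 1) := by
    have hrw : (m:ℝ) ^ (q + 2 * p - 1) = ((m:ℝ) ^ (1 - 2 * p - q))⁻¹ := by
      rw [show q + 2 * p - 1 = -(1 - 2 * p - q) by ring, Real.rpow_neg hmpos.le]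
    rw [hBdef, hrw, ← hprod, hgdef]
    field_simp
    ring
  rw [hBeq] at hlow
  linarith
end MainBound

lemma TV_le_one {α : Type*} [MeasurableSpace α] (μ ν : Measure α)
    [IsProbabilityMeasure μ] [IsProbabilityMeasure ν] : TV μ ν ≤ 1 := by
  apply ciSup_le
  intro A
  have h1 : (μ A).toReal ≤ 1 := by
    apply ENNReal.toReal_le_of_le_ofReal zero_le_one
    simpa using prob_le_one
  have h2 : (ν A).toReal ≤ 1 := by
    apply ENNReal.toReal_le_of_le_ofReal zero_le_one
    simpa using prob_le_one
  have h3 : 0 ≤ (μ A).toReal := ENNReal.toReal_nonneg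
  have h4 : 0 ≤ (ν A).toReal := ENNReal.toReal_nonneg
  rw [abs_le]
  constructor <;> linarith

/-- **Theorem 3.2, part 1 (asymptotic separation).** Let `0 < p, q < 1` with `q + 2p < 1`,
`ε_m = m^{-p}`, and `a m t ∈ (0,1]` with `a m t ≤ 1 - m^{-q}` for all `m ≥ 2`, `1 ≤ t ≤ m`.
Then the null and alternative hypotheses separate asymptotically:
`TV(P0_m, P1_m) → 1` as `m → ∞`. -/
theorem asymptotic_separation (p q : ℝ) (hp0 : 0 < p) (hp1 : p < 1)
    (hq0 : 0 < q) (hq1 : q < 1) (hpq : q + 2 * p < 1)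
    (a : (m : ℕ) → Fin m → ℝ)
    (ha0 : ∀ m, 2 ≤ m → ∀ t, 0 < a m t)
    (ha1 : ∀ m : ℕ, 2 ≤ m → ∀ t, a m t ≤ 1 - (m : ℝ) ^ (-q)) :
    Tendsto (fun m => TV (nullLaw m) (altLaw m ((m : ℝ) ^ (-p)) (a m))) atTop (nhds 1) := by
  have hlim : Tendsto (fun m : ℕ => 1 - 8 * (m:ℝ) ^ (q + 2 * p - 1)) atTop (nhds 1) := by
    have h1 : Tendsto (fun x : ℝ => x ^ (-(1 - q - 2 * p))) atTop (nhds 0) :=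
      tendsto_rpow_neg_atTop (by linarith)
    have h2 : Tendsto (fun m : ℕ => (m:ℝ) ^ (q + 2 * p - 1)) atTop (nhds 0) := by
      have := h1.comp tendsto_natCast_atTop_atTop
      simpa [Function.comp_def, show -(1 - q - 2 * p) = q + 2 * p - 1 by ring] using this
    have h3 := Tendsto.sub (tendsto_const_nhds (x := (1:ℝ)) (f := (atTop : Filter ℕ)))
      (h2.const_mul 8)
    simpa using h3
  refine tendsto_of_tendsto_of_tendsto_of_le_of_le' hlim tendsto_const_nhds ?_ ?_
  · filter_upwards [eventually_ge_atTop 2] with m hm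
    exact main_bound p q hp0 hq0 m hm (a m) (ha0 m hm) (ha1 m hm)
  · filter_upwards [eventually_ge_atTop 2] with m hm
    have hm1 : (1:ℝ) < m := by exact_mod_cast Nat.lt_of_lt_of_le one_lt_two hm
    have hmpos : (0:ℝ) < m := by linarith
    have hε0 : 0 < (m:ℝ) ^ (-p) := Real.rpow_pos_of_pos hmpos _
    have hε1 : (m:ℝ) ^ (-p) < 1 := Real.rpow_lt_one_of_one_lt_of_neg hm1 (by linarith)
    haveI I0 : IsProbabilityMeasure (unif 1) := unif_prob one_pos
    haveI I1 : ∀ t : Fin m, IsProbabilityMeasure ((fun t : Fin m => mix ((m:ℝ) ^ (-p)) (a m t)) t) :=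
      fun t => mix_prob hε0.le hε1.le (ha0 m hm t)
    haveI : IsProbabilityMeasure (nullLaw m) := by unfold nullLaw; infer_instance
    haveI : IsProbabilityMeasure (altLaw m ((m:ℝ) ^ (-p)) (a m)) := by unfold altLaw; infer_instance
    exact TV_le_one _ _
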